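/- For every integer d ≥ 1 there exists a constant C_d ∈ ℕ such that the following holds: for every graphic matrix M that is d-mixed-free and every symmetric division D of M, the chromatic number of the mixed compression G^M_D satisfies χ(G^M_D) ≤ C_d. -/

import Mathlib

namespace TwPaper


/-- A `{0,1}`-matrix with `m` rows and `n` columns, entries modeled as `Bool`. -/
abbrev BMatrix (m n : ℕ) := Matrix (Fin m) (Fin n) Bool

/-- The submatrix of `M` given by rows `R` and columns `C` is horizontal:
all its rows are constant. -/
def Horizontal {m n : ℕ} (M : BMatrix m n) (R : Set (Fin m)) (C : Set (Fin n)) : Prop :=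
  ∀ i ∈ R, ∀ j ∈ C, ∀ j' ∈ C, M i j = M i j'

/-- The submatrix of `M` given by rows `R` and columns `C` is vertical:
all its columns are constant. -/
def Vertical {m n : ℕ} (M : BMatrix m n) (R : Set (Fin m)) (C : Set (Fin n)) : Prop :=
  ∀ j ∈ C, ∀ i ∈ R, ∀ i' ∈ R, M i j = M i' j

/-- The submatrix of `M` given by rows `R` and columns `C` is mixed:
neither horizontal nor vertical. -/
def Mixed {m n : ℕ} (M : BMatrix m n) (R : Set (Fin m)) (C : Set (Fin n)) : Prop :=
  ¬ Horizontal M R C ∧ ¬ Vertical M R C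

/-- The submatrix of `M` given by rows `R` and columns `C` is constant `0`. -/
def ConstantZero {m n : ℕ} (M : BMatrix m n) (R : Set (Fin m)) (C : Set (Fin n)) : Prop :=
  ∀ i ∈ R, ∀ j ∈ C, M i j = false

/-- A `d`-division of an `m × n` matrix: a partition of the rows into `d` contiguous
nonempty blocks, and likewise for columns.  It is encoded by the monotone surjective
maps sending a row (resp. column) to the index of its block. -/
structure Division (m n d : ℕ) where
  row : Fin m → Fin d
  col : Fin n → Fin d
  row_mono : Monotone row
  col_mono : Monotone col
  row_surj : Function.Surjective row
  col_surj : Function.Surjective col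

/-- The `i`-th row block of a division. -/
def Division.rowBlock {m n d : ℕ} (D : Division m n d) (i : Fin d) : Set (Fin m) :=
  {a | D.row a = i}

/-- The `j`-th column block of a division. -/
def Division.colBlock {m n d : ℕ} (D : Division m n d) (j : Fin d) : Set (Fin n) :=
  {b | D.col b = j}

/-- The zone `D[i,j]` of the division `D` of `M` is mixed. -/
def Division.ZoneMixed {m n d : ℕ} (D : Division m n d) (M : BMatrix m n) (i j : Fin d) : Prop :=
  Mixed M (D.rowBlock i) (D.colBlock j)

/-- A `d`-division is a `d`-almost mixed minor if every off-diagonal zone is mixed. -/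
def IsAlmostMixedMinor {m n d : ℕ} (M : BMatrix m n) (D : Division m n d) : Prop :=
  ∀ i j : Fin d, i ≠ j → D.ZoneMixed M i j

/-- A `d`-division is a `d`-mixed minor if every zone is mixed. -/
def IsMixedMinor {m n d : ℕ} (M : BMatrix m n) (D : Division m n d) : Prop :=
  ∀ i j : Fin d, D.ZoneMixed M i j

/-- `M` is `d`-almost mixed-free: it has no `d`-almost mixed minor. -/
def AlmostMixedFree {m n : ℕ} (d : ℕ) (M : BMatrix m n) : Prop :=
  ¬ ∃ D : Division m n d, IsAlmostMixedMinor M D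

/-- `M` is `d`-mixed-free: it has no `d`-mixed minor. -/
def MixedFree {m n : ℕ} (d : ℕ) (M : BMatrix m n) : Prop :=
  ¬ ∃ D : Division m n d, IsMixedMinor M D

/-- A graphic matrix: symmetric with zero diagonal. -/
def Graphic {n : ℕ} (M : BMatrix n n) : Prop :=
  (∀ i j, M i j = M j i) ∧ (∀ i, M i i = false)

/-- A division of a square matrix is symmetric if rows and columns are
partitioned in exactly the same way. -/
def Division.Symm {n d : ℕ} (D : Division n n d) : Prop := D.row = D.col

/-- `L` is a coarsening of `D`: every row (resp. column) block of `L` is a union of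
consecutive row (resp. column) blocks of `D`. -/
def Coarsens {m n d e : ℕ} (L : Division m n e) (D : Division m n d) : Prop :=
  (∀ a a' : Fin m, D.row a = D.row a' → L.row a = L.row a') ∧
  (∀ b b' : Fin n, D.col b = D.col b' → L.col b = L.col b')

/-- The zone is horizontal and not constant `0`. -/
def HorizNonzero {m n : ℕ} (M : BMatrix m n) (R : Set (Fin m)) (C : Set (Fin n)) : Prop :=
  Horizontal M R C ∧ ¬ ConstantZero M R C

/-- The zone is vertical and not constant `0`. -/
def VertNonzero {m n : ℕ} (M : BMatrix m n) (R : Set (Fin m)) (C : Set (Fin n)) : Prop :=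
  Vertical M R C ∧ ¬ ConstantZero M R C

/-- The horizontal compression `G^H_D` of a graphic matrix `M` along a symmetric
division `D` with `s` blocks: vertices are the blocks, and `i j` (for `i < j`) are
adjacent iff the zone `D[i,j]` is horizontal and not constant `0`. -/
def horizCompression {n s : ℕ} (M : BMatrix n n) (D : Division n n s) : SimpleGraph (Fin s) :=
  SimpleGraph.fromRel (fun i j => i < j ∧ HorizNonzero M (D.rowBlock i) (D.colBlock j))

/-- The vertical compression `G^V_D`. -/
def vertCompression {n s : ℕ} (M : BMatrix n n) (D : Division n n s) : SimpleGraph (Fin s) :=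
  SimpleGraph.fromRel (fun i j => i < j ∧ VertNonzero M (D.rowBlock i) (D.colBlock j))

/-- The mixed compression `G^M_D`: `i ≠ j` are adjacent iff the zone `D[i,j]` is mixed. -/
def mixedCompression {n s : ℕ} (M : BMatrix n n) (D : Division n n s) : SimpleGraph (Fin s) :=
  SimpleGraph.fromRel (fun i j => D.ZoneMixed M i j)

open Classical in
/-- The adjacency matrix of a graph on `Fin s`, rows and columns in the natural order. -/
noncomputable def graphMatrix {s : ℕ} (G : SimpleGraph (Fin s)) : BMatrix s s :=
  fun i j => if G.Adj i j then true else false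

open Classical in
/-- The adjacency matrix of `G` under the vertex ordering given by the
enumeration `e` of its vertices. -/
noncomputable def adjMatrix {V : Type*} [Fintype V] (G : SimpleGraph V)
    (e : Fin (Fintype.card V) ≃ V) : BMatrix (Fintype.card V) (Fintype.card V) :=
  fun i j => if G.Adj (e i) (e j) then true else false

/-- `G` admits, under some linear ordering of its vertices, a `d`-almost mixed-free
adjacency matrix. -/
def AdmitsAMFree {V : Type*} [Fintype V] (d : ℕ) (G : SimpleGraph V) : Prop :=
  ∃ e : Fin (Fintype.card V) ≃ V, AlmostMixedFree d (adjMatrix G e)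


open Matrix

def stepMap {s k : ℕ} (hk : 0 < k) (u : Fin k → Fin s) (a : Fin s) : Fin k :=
  ⟨(Finset.univ.filter fun m => u m ≤ a).card - 1, by
    have h : (Finset.univ.filter fun m => u m ≤ a).card ≤ k := by
      simpa using Finset.card_filter_le Finset.univ fun m => u m ≤ a
    omega⟩

lemma stepMap_mono {s k : ℕ} (hk : 0 < k) (u : Fin k → Fin s) :
    Monotone (stepMap hk u) := by
  intro a b hab
  have : (Finset.univ.filter fun m => u m ≤ a) ⊆ (Finset.univ.filter fun m => u m ≤ b) := by
    intro m hm
    simp only [Finset.mem_filter, Finset.mem_univ, true_and] at *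
    exact le_trans hm hab
  have := Finset.card_le_card this
  simp only [stepMap, Fin.mk_le_mk]
  omega

lemma stepMap_apply {s k : ℕ} (hk : 0 < k) {u : Fin k → Fin s} (hu : StrictMono u)
    (m : Fin k) : stepMap hk u (u m) = m := by
  have : (Finset.univ.filter fun m' => u m' ≤ u m) = Finset.Iic m := by
    ext m'
    simp [hu.le_iff_le]
  simp only [stepMap, this]
  ext
  simp [Fin.card_Iic]

lemma stepMap_surj {s k : ℕ} (hk : 0 < k) {u : Fin k → Fin s} (hu : StrictMono u) :
    Function.Surjective (stepMap hk u) := fun m => ⟨u m, stepMap_apply hk hu m⟩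

def ones {m n : ℕ} (Z : BMatrix m n) : ℕ :=
  (Finset.univ.filter fun p : Fin m × Fin n => Z p.1 p.2 = true).card

def HasGrid {s : ℕ} (k : ℕ) (Z : BMatrix s s) : Prop :=
  ∃ E : Division s s k, ∀ i j : Fin k, ∃ a b : Fin s,
    E.row a = i ∧ E.col b = j ∧ Z a b = true

lemma ones_le {m n : ℕ} (Z : BMatrix m n) : ones Z ≤ m * n := by
  have := Finset.card_filter_le (Finset.univ : Finset (Fin m × Fin n))
    (fun p => Z p.1 p.2 = true)
  simpa [ones] using this

lemma hasGrid_transpose {s k : ℕ} {Z : BMatrix s s} (h : HasGrid k Zᵀ) : HasGrid k Z := by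
  obtain ⟨E, hE⟩ := h
  refine ⟨⟨E.col, E.row, E.col_mono, E.row_mono, E.col_surj, E.row_surj⟩, fun i j => ?_⟩
  obtain ⟨a, b, ha, hb, hz⟩ := hE j i
  exact ⟨b, a, hb, ha, hz⟩

section Blocks
variable {s t : ℕ} (Z : BMatrix s s) (q : Fin s → Fin t)

def blockOnes (u v : Fin t) : Finset (Fin s × Fin s) :=
  Finset.univ.filter fun p => q p.1 = u ∧ q p.2 = v ∧ Z p.1 p.2 = true

def rowSet (u v : Fin t) : Finset (Fin s) := (blockOnes Z q u v).image Prod.fst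
def colSet (u v : Fin t) : Finset (Fin s) := (blockOnes Z q u v).image Prod.snd

lemma blockOnes_transpose (u v : Fin t) :
    blockOnes Zᵀ q u v = (blockOnes Z q v u).image Prod.swap := by
  ext p
  simp only [blockOnes, Finset.mem_image, Finset.mem_filter, Finset.mem_univ, true_and]
  simp only [Matrix.transpose_apply]
  constructor
  · rintro ⟨h1, h2, h3⟩; exact ⟨(p.2, p.1), ⟨h2, h1, h3⟩, rfl⟩
  · rintro ⟨x, ⟨h1, h2, h3⟩, rfl⟩; exact ⟨h2, h1, h3⟩

lemma colSet_transpose (u v : Fin t) : colSet Zᵀ q u v = rowSet Z q v u := by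
  rw [colSet, rowSet, blockOnes_transpose, Finset.image_image]
  rfl

lemma blockOnes_card_le (u v : Fin t) :
    (blockOnes Z q u v).card ≤ (rowSet Z q u v).card * (colSet Z q u v).card := by
  rw [← Finset.card_product]
  apply Finset.card_le_card
  intro p hp
  simp only [Finset.mem_product, rowSet, colSet]
  exact ⟨Finset.mem_image_of_mem _ hp, Finset.mem_image_of_mem _ hp⟩

lemma rowSet_subset_fiber (u v : Fin t) :
    rowSet Z q u v ⊆ Finset.univ.filter fun a => q a = u := by
  intro a ha
  simp only [rowSet, Finset.mem_image, blockOnes, Finset.mem_filter, Finset.mem_univ,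
    true_and] at ha ⊢
  obtain ⟨p, ⟨h1, _, _⟩, rfl⟩ := ha
  exact h1

lemma colSet_subset_fiber (u v : Fin t) :
    colSet Z q u v ⊆ Finset.univ.filter fun b => q b = v := by
  intro a ha
  simp only [colSet, Finset.mem_image, blockOnes, Finset.mem_filter, Finset.mem_univ,
    true_and] at ha ⊢
  obtain ⟨p, ⟨_, h2, _⟩, rfl⟩ := ha
  exact h2

end Blocks

lemma wide_count_le {s t k : ℕ} (hk : 2 ≤ k) (Z : BMatrix s s) (hng : ¬ HasGrid k Z)
    (q : Fin s → Fin t) (hmono : Monotone q) (hsurj : Function.Surjective q)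
    (hfib : ∀ v : Fin t, (Finset.univ.filter fun b : Fin s => q b = v).card ≤ k^2) :
    (Finset.univ.filter fun p : Fin t × Fin t => k ≤ (colSet Z q p.1 p.2).card).card
      ≤ t * ((k-1) * Nat.choose (k^2) k) := by
  have hk0 : 0 < k := by omega
  set B := Nat.choose (k^2) k with hB
  -- per-strip bound
  have strip : ∀ v : Fin t,
      (Finset.univ.filter fun u : Fin t => k ≤ (colSet Z q u v).card).card ≤ (k-1) * B := by
    intro v
    by_contra hlt
    push_neg at hlt
    set Wv := Finset.univ.filter fun u : Fin t => k ≤ (colSet Z q u v).card with hWv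
    -- choice of a k-subset of the column set
    have exch : ∀ u ∈ Wv, ∃ S ⊆ colSet Z q u v, S.card = k := by
      intro u hu
      simp only [hWv, Finset.mem_filter, Finset.mem_univ, true_and] at hu
      exact Finset.exists_subset_card_eq hu
    classical
    choose! ch hch1 hch2 using exch
    have hmaps : ∀ u ∈ Wv, ch u ∈ (Finset.univ.filter fun b : Fin s => q b = v).powersetCard k := by
      intro u hu
      rw [Finset.mem_powersetCard]
      exact ⟨(hch1 u hu).trans (colSet_subset_fiber Z q u v), hch2 u hu⟩
    have hcard : ((Finset.univ.filter fun b : Fin s => q b = v).powersetCard k).card * (k-1)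
        < Wv.card := by
      calc ((Finset.univ.filter fun b : Fin s => q b = v).powersetCard k).card * (k-1)
          ≤ B * (k-1) := by
            apply Nat.mul_le_mul_right
            rw [Finset.card_powersetCard, hB]
            exact Nat.choose_le_choose k (hfib v)
        _ < Wv.card := by rw [Nat.mul_comm]; exact hlt
    obtain ⟨S, hSmem, hSfib⟩ :=
      Finset.exists_lt_card_fiber_of_mul_lt_card_of_maps_to hmaps hcard
    rw [Finset.mem_powersetCard] at hSmem
    obtain ⟨hSsub, hScard⟩ := hSmem
    have hkfib : k ≤ (Wv.filter fun u => ch u = S).card := by omega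
    obtain ⟨U, hUsub, hUcard⟩ := Finset.exists_subset_card_eq hkfib
    -- strictly monotone enumerations
    set uF : Fin k → Fin t := fun m => U.orderEmbOfFin hUcard m with huF
    set bF : Fin k → Fin s := fun m => S.orderEmbOfFin hScard m with hbF
    have huSM : StrictMono uF := (U.orderEmbOfFin hUcard).strictMono
    have hbSM : StrictMono bF := (S.orderEmbOfFin hScard).strictMono
    apply hng
    refine ⟨⟨stepMap hk0 uF ∘ q, stepMap hk0 bF,
      (stepMap_mono hk0 uF).comp hmono, stepMap_mono hk0 bF,
      (stepMap_surj hk0 huSM).comp hsurj, stepMap_surj hk0 hbSM⟩, ?_⟩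
    intro i j
    have hui : uF i ∈ Wv.filter fun u => ch u = S := hUsub (U.orderEmbOfFin_mem hUcard i)
    rw [Finset.mem_filter] at hui
    obtain ⟨huiW, huiS⟩ := hui
    have hbj : bF j ∈ colSet Z q (uF i) v := by
      apply hch1 (uF i) huiW
      rw [huiS]
      exact S.orderEmbOfFin_mem hScard j
    rw [colSet, Finset.mem_image] at hbj
    obtain ⟨p, hp, hp2⟩ := hbj
    rw [blockOnes, Finset.mem_filter] at hp
    obtain ⟨-, hq1, hq2, hZ⟩ := hp
    refine ⟨p.1, p.2, ?_, ?_, hZ⟩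
    · show stepMap hk0 uF (q p.1) = i
      rw [hq1]
      exact stepMap_apply hk0 huSM i
    · show stepMap hk0 bF p.2 = j
      rw [hp2]
      exact stepMap_apply hk0 hbSM j
  -- total over strips
  have := Finset.card_eq_sum_card_fiberwise
    (f := fun p : Fin t × Fin t => p.2)
    (s := Finset.univ.filter fun p : Fin t × Fin t => k ≤ (colSet Z q p.1 p.2).card)
    (t := Finset.univ) (fun x _ => Finset.mem_univ _)
  rw [this]
  calc ∑ v : Fin t, ((Finset.univ.filter fun p : Fin t × Fin t =>
        k ≤ (colSet Z q p.1 p.2).card).filter fun p => p.2 = v).card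
      ≤ ∑ v : Fin t, (k-1) * B := by
        apply Finset.sum_le_sum
        intro v _
        refine le_trans ?_ (strip v)
        apply Finset.card_le_card_of_injOn (fun p => p.1)
        · intro p hp
          simp only [Finset.mem_coe, Finset.mem_filter, Finset.mem_univ, true_and] at hp ⊢
          exact hp.2 ▸ hp.1
        · intro p hp p' hp' h
          simp only [Finset.mem_coe, Finset.mem_filter] at hp hp'
          exact Prod.ext h (hp.2.trans hp'.2.symm)
      _ = t * ((k-1) * B) := by simp [Finset.sum_const, Nat.mul_comm]


lemma tall_count_eq {s t k : ℕ} (Z : BMatrix s s) (q : Fin s → Fin t) :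
    (Finset.univ.filter fun p : Fin t × Fin t => k ≤ (rowSet Z q p.1 p.2).card).card
      = (Finset.univ.filter fun p : Fin t × Fin t => k ≤ (colSet Zᵀ q p.1 p.2).card).card := by
  apply Finset.card_bij (fun p _ => Prod.swap p)
  · intro p hp
    simp only [Finset.mem_filter, Finset.mem_univ, true_and] at hp ⊢
    rw [colSet_transpose]
    exact hp
  · intro p _ p' _ h
    exact Prod.swap_injective h
  · intro p hp
    refine ⟨Prod.swap p, ?_, by simp⟩
    simp only [Finset.mem_filter, Finset.mem_univ, true_and, colSet_transpose] at hp ⊢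
    exact hp

lemma ones_eq_sum_blocks {s t : ℕ} (Z : BMatrix s s) (q : Fin s → Fin t) :
    ones Z = ∑ p : Fin t × Fin t, (blockOnes Z q p.1 p.2).card := by
  rw [ones, Finset.card_eq_sum_card_fiberwise
    (f := fun p : Fin s × Fin s => (q p.1, q p.2)) (t := Finset.univ)
    (fun x _ => Finset.mem_univ _)]
  apply Finset.sum_congr rfl
  intro b _
  congr 1
  ext p
  simp only [blockOnes, Finset.mem_filter, Finset.mem_univ, true_and, Prod.ext_iff]
  tauto

lemma hasGrid_contract {s t k : ℕ} (Z : BMatrix s s) (q : Fin s → Fin t)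
    (hmono : Monotone q) (hsurj : Function.Surjective q)
    (h : HasGrid k (fun u v => decide ((blockOnes Z q u v).Nonempty))) : HasGrid k Z := by
  obtain ⟨E, hE⟩ := h
  refine ⟨⟨E.row ∘ q, E.col ∘ q, E.row_mono.comp hmono, E.col_mono.comp hmono,
    E.row_surj.comp hsurj, E.col_surj.comp hsurj⟩, ?_⟩
  intro i j
  obtain ⟨u, v, hu, hv, hz⟩ := hE i j
  rw [decide_eq_true_eq] at hz
  obtain ⟨p, hp⟩ := hz
  rw [blockOnes, Finset.mem_filter] at hp
  obtain ⟨-, h1, h2, h3⟩ := hp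
  exact ⟨p.1, p.2, by simp [h1, hu], by simp [h2, hv], h3⟩

lemma mt_arith (j B s t c : ℕ) (hB : 1 ≤ B) (hc : c = 6*(j+2)^6*(B+1))
    (hs : (j+2)^6 < s) (ht : (j+2)^2 * t ≤ s + (j+2)^2) :
    (j+1)^2*(c*t) + (j+2)^4*(2*(t*((j+1)*B))) ≤ c*s := by
  have hK : 0 < (j+2)^2 := by positivity
  apply Nat.le_of_mul_le_mul_left _ hK
  have hT1 : (j+1)^2*c*(j+2)^2 ≤ c*s := by
    have h1 : (j+1)^2*(j+2)^2 ≤ s := by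
      calc (j+1)^2*(j+2)^2 ≤ (j+2)^2*(j+2)^2 := by gcongr <;> omega
        _ ≤ (j+2)^6 := by
            rw [← pow_add]
            exact Nat.pow_le_pow_right (by omega) (by omega)
        _ ≤ s := le_of_lt hs
    calc (j+1)^2*c*(j+2)^2 = c * ((j+1)^2*(j+2)^2) := by ring
      _ ≤ c * s := Nat.mul_le_mul_left _ h1
  have hT2 : 2*(j+2)^4*((j+1)*B)*s ≤ c*s := by
    apply Nat.mul_le_mul_right
    calc 2*(j+2)^4*((j+1)*B) ≤ 6*(j+2)^4*((j+2)^2*(B+1)) := by gcongr <;> nlinarith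
      _ = 6*(j+2)^6*(B+1) := by ring
      _ = c := hc.symm
  have hT3 : 2*(j+2)^4*((j+1)*B)*(j+2)^2 ≤ c*s := by
    calc 2*(j+2)^4*((j+1)*B)*(j+2)^2 ≤ 6*(j+2)^4*((j+2)^2*(B+1))*(j+2)^2 := by
          gcongr <;> nlinarith
      _ = (6*(j+2)^6*(B+1)) * (j+2)^2 := by ring
      _ ≤ c * s := by
          rw [← hc]
          refine Nat.mul_le_mul_left _ ?_
          exact le_of_lt (lt_of_le_of_lt (Nat.pow_le_pow_right (by omega) (by omega)) hs)
  calc (j+2)^2 * ((j+1)^2*(c*t) + (j+2)^4*(2*(t*((j+1)*B))))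
      = ((j+1)^2*c + 2*(j+2)^4*((j+1)*B)) * ((j+2)^2 * t) := by ring
    _ ≤ ((j+1)^2*c + 2*(j+2)^4*((j+1)*B)) * (s + (j+2)^2) := Nat.mul_le_mul_left _ ht
    _ = (j+1)^2*(c*s) + ((j+1)^2*c*(j+2)^2 + 2*(j+2)^4*((j+1)*B)*s
          + 2*(j+2)^4*((j+1)*B)*(j+2)^2) := by ring
    _ ≤ (j+1)^2*(c*s) + ((2*j+3)*(c*s)) := by
        have h3 : 3*(c*s) ≤ (2*j+3)*(c*s) := Nat.mul_le_mul_right _ (by omega)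
        linarith
    _ = (j+2)^2 * (c*s) := by ring


def mtConst (k : ℕ) : ℕ := 6 * k^6 * (Nat.choose (k^2) k + 1)

theorem mt_bound (k : ℕ) (hk : 1 ≤ k) :
    ∀ s : ℕ, ∀ Z : BMatrix s s, ¬ HasGrid k Z → ones Z ≤ mtConst k * s := by
  rcases eq_or_lt_of_le hk with h1 | hk2
  · -- k = 1 : no true entry at all
    intro s Z hng
    have h0 : ones Z = 0 := by
      rw [ones, Finset.card_eq_zero, Finset.filter_eq_empty_iff]
      intro p _ hZ
      apply hng
      rw [← h1]
      refine ⟨⟨fun _ => 0, fun _ => 0, monotone_const, monotone_const,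
        fun i => ⟨p.1, Subsingleton.elim _ _⟩, fun i => ⟨p.2, Subsingleton.elim _ _⟩⟩, ?_⟩
      intro i j
      exact ⟨p.1, p.2, Subsingleton.elim _ _, Subsingleton.elim _ _, hZ⟩
    omega
  · intro s
    induction s using Nat.strong_induction_on with
    | _ s IH =>
      intro Z hng
      classical
      by_cases hs : s ≤ k^6
      · calc ones Z ≤ s * s := by simpa using ones_le Z
          _ ≤ k^6 * s := Nat.mul_le_mul_right _ hs
          _ ≤ mtConst k * s := by
              apply Nat.mul_le_mul_right
              have : 1 ≤ Nat.choose (k^2) k + 1 := by omega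
              calc k^6 ≤ 6 * k^6 * 1 := by omega
                _ ≤ 6 * k^6 * (Nat.choose (k^2) k + 1) := by
                    exact Nat.mul_le_mul_left _ this
      · push_neg at hs
        have hk6 : 64 ≤ k^6 := by
          calc (64:ℕ) = 2^6 := by norm_num
            _ ≤ k^6 := Nat.pow_le_pow_left hk2 6
        have hs1 : 2 ≤ s := by omega
        set K := k^2 with hKdef
        have hK2 : 2 ≤ K := by
          have : k ≤ k^2 := Nat.le_self_pow (by norm_num) k
          omega
        have hK0 : 0 < K := by omega
        set t := (s-1)/K + 1 with htdef
        have hqlt : ∀ a : Fin s, a.val / K < t := by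
          intro a
          have h1 : a.val ≤ s - 1 := by omega
          have := Nat.div_le_div_right (c := K) h1
          omega
        set q : Fin s → Fin t := fun a => ⟨a.val / K, hqlt a⟩ with hqdef
        have hqmono : Monotone q := by
          intro a b hab
          simp only [hqdef, Fin.mk_le_mk]
          exact Nat.div_le_div_right hab
        have hqsurj : Function.Surjective q := by
          intro u
          have hu : u.val ≤ (s-1)/K := by have := u.isLt; omega
          have h2 : u.val * K ≤ s - 1 := (Nat.le_div_iff_mul_le hK0).mp hu
          refine ⟨⟨u.val * K, by omega⟩, ?_⟩
          apply Fin.ext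
          simp only [hqdef]
          exact Nat.mul_div_cancel u.val hK0
        have hfib : ∀ v : Fin t, (Finset.univ.filter fun b : Fin s => q b = v).card ≤ k^2 := by
          intro v
          have : (Finset.univ.filter fun b : Fin s => q b = v).card ≤
              (Finset.univ : Finset (Fin K)).card := by
            apply Finset.card_le_card_of_injOn
              (fun a => ⟨a.val % K, Nat.mod_lt _ hK0⟩)
            · intro a _; exact Finset.mem_univ _
            · intro a ha a' ha' hmod
              simp only [Finset.mem_coe, Finset.mem_filter, Finset.mem_univ, true_and] at ha ha'
              have hv : a.val / K = a'.val / K := congrArg Fin.val (ha.trans ha'.symm)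
              have hm : a.val % K = a'.val % K := congrArg Fin.val hmod
              have d1 := Nat.div_add_mod a.val K
              have d2 := Nat.div_add_mod a'.val K
              exact Fin.ext (by rw [← d1, ← d2, hv, hm])
          simpa using this
        set Z₁ : BMatrix t t := fun u v => decide ((blockOnes Z q u v).Nonempty) with hZ₁
        have hng₁ : ¬ HasGrid k Z₁ := fun h => hng (hasGrid_contract Z q hqmono hqsurj h)
        have hngT : ¬ HasGrid k Zᵀ := fun h => hng (hasGrid_transpose h)
        have htlt : t < s := by
          have := Nat.div_lt_self (show 0 < s - 1 by omega) hK2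
          omega
        have hN : ones Z₁ ≤ mtConst k * t := IH t htlt Z₁ hng₁
        set B := Nat.choose (k^2) k with hBdef
        have hW : (Finset.univ.filter fun p : Fin t × Fin t =>
            k ≤ (colSet Z q p.1 p.2).card).card ≤ t * ((k-1) * B) :=
          wide_count_le hk2 Z hng q hqmono hqsurj hfib
        have hT : (Finset.univ.filter fun p : Fin t × Fin t =>
            k ≤ (rowSet Z q p.1 p.2).card).card ≤ t * ((k-1) * B) := by
          rw [tall_count_eq Z q]
          exact wide_count_le hk2 Zᵀ hngT q hqmono hqsurj hfib
        -- decompose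
        rw [ones_eq_sum_blocks Z q]
        set A := Finset.univ.filter
          (fun p : Fin t × Fin t => (blockOnes Z q p.1 p.2).Nonempty) with hAdef
        have hsum : ∑ p : Fin t × Fin t, (blockOnes Z q p.1 p.2).card
            = ∑ p ∈ A, (blockOnes Z q p.1 p.2).card := by
          symm
          apply Finset.sum_subset (Finset.filter_subset _ _)
          intro p _ hp
          simp only [hAdef, Finset.mem_filter, Finset.mem_univ, true_and] at hp
          exact Finset.card_eq_zero.mpr (Finset.not_nonempty_iff_eq_empty.mp hp)
        rw [hsum]
        set Big : Fin t × Fin t → Prop := fun p =>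
          k ≤ (rowSet Z q p.1 p.2).card ∨ k ≤ (colSet Z q p.1 p.2).card with hBig
        rw [← Finset.sum_filter_add_sum_filter_not A Big]
        have hAcard : A.card = ones Z₁ := by
          rw [ones]
          congr 1
          ext p
          simp [hAdef, hZ₁]
        have hbcard : ∀ p : Fin t × Fin t, (blockOnes Z q p.1 p.2).card ≤ k^4 := by
          intro p
          calc (blockOnes Z q p.1 p.2).card
              ≤ (rowSet Z q p.1 p.2).card * (colSet Z q p.1 p.2).card :=
                blockOnes_card_le Z q p.1 p.2
            _ ≤ K * K := Nat.mul_le_mul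
                ((Finset.card_le_card (rowSet_subset_fiber Z q p.1 p.2)).trans (hfib p.1))
                ((Finset.card_le_card (colSet_subset_fiber Z q p.1 p.2)).trans (hfib p.2))
            _ = k^4 := by rw [hKdef]; ring
        have hbig : ∑ p ∈ A.filter Big, (blockOnes Z q p.1 p.2).card
            ≤ k^4 * (2*(t*((k-1)*B))) := by
          calc ∑ p ∈ A.filter Big, (blockOnes Z q p.1 p.2).card
              ≤ (A.filter Big).card * k^4 := by
                have := Finset.sum_le_card_nsmul (A.filter Big)
                  (fun p => (blockOnes Z q p.1 p.2).card) (k^4) (fun p _ => hbcard p)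
                simpa using this
            _ ≤ (2*(t*((k-1)*B))) * k^4 := by
                apply Nat.mul_le_mul_right
                have hsub : A.filter Big ⊆
                    (Finset.univ.filter fun p : Fin t × Fin t =>
                      k ≤ (rowSet Z q p.1 p.2).card) ∪
                    (Finset.univ.filter fun p : Fin t × Fin t =>
                      k ≤ (colSet Z q p.1 p.2).card) := by
                  intro p hp
                  rw [Finset.mem_filter] at hp
                  rcases hp.2 with h | h
                  · exact Finset.mem_union_left _ (by simp [h])
                  · exact Finset.mem_union_right _ (by simp [h])
                calc (A.filter Big).card ≤ _ := Finset.card_le_card hsub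
                  _ ≤ _ + _ := Finset.card_union_le _ _
                  _ ≤ t*((k-1)*B) + t*((k-1)*B) := Nat.add_le_add hT hW
                  _ = 2*(t*((k-1)*B)) := by ring
            _ = k^4 * (2*(t*((k-1)*B))) := Nat.mul_comm _ _
        have hsmall : ∑ p ∈ A.filter (fun p => ¬ Big p), (blockOnes Z q p.1 p.2).card
            ≤ (k-1)^2 * (mtConst k * t) := by
          calc ∑ p ∈ A.filter (fun p => ¬ Big p), (blockOnes Z q p.1 p.2).card
              ≤ (A.filter (fun p => ¬ Big p)).card * ((k-1)*(k-1)) := by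
                have := Finset.sum_le_card_nsmul (A.filter (fun p => ¬ Big p))
                  (fun p => (blockOnes Z q p.1 p.2).card) ((k-1)*(k-1)) ?_
                · simpa using this
                · intro p hp
                  rw [Finset.mem_filter, hBig] at hp
                  push_neg at hp
                  calc (blockOnes Z q p.1 p.2).card
                      ≤ (rowSet Z q p.1 p.2).card * (colSet Z q p.1 p.2).card :=
                        blockOnes_card_le Z q p.1 p.2
                    _ ≤ (k-1)*(k-1) := Nat.mul_le_mul (by omega) (by omega)
            _ ≤ (ones Z₁) * ((k-1)*(k-1)) := by
                apply Nat.mul_le_mul_right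
                rw [← hAcard]
                exact Finset.card_le_card (Finset.filter_subset _ _)
            _ ≤ (mtConst k * t) * ((k-1)*(k-1)) := Nat.mul_le_mul_right _ hN
            _ = (k-1)^2 * (mtConst k * t) := by ring
        -- combine and conclude with the arithmetic lemma
        have harith : (k-1)^2 * (mtConst k * t) + k^4 * (2*(t*((k-1)*B)))
            ≤ mtConst k * s := by
          obtain ⟨j, rfl⟩ : ∃ j, k = j + 2 := ⟨k - 2, by omega⟩
          have hkt : (j+2)^2 * t ≤ s + (j+2)^2 := by
            have h1 : K * ((s-1)/K) ≤ s - 1 := by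
              rw [Nat.mul_comm]
              exact Nat.div_mul_le_self _ _
            have h2 : K * t = K * ((s-1)/K) + K := by rw [htdef]; ring
            rw [← hKdef]
            omega
          have hB1 : 1 ≤ B := by
            rw [hBdef]
            exact Nat.choose_pos (Nat.le_self_pow (by norm_num) _)
          have hceq : mtConst (j+2) = 6*(j+2)^6*(B+1) := by
            unfold mtConst
            rw [hBdef]
          have hmt := mt_arith j B s t (mtConst (j+2)) hB1 hceq hs hkt
          have hsub : (j + 2) - 1 = j + 1 := rfl
          rw [hsub]
          exact hmt
        calc ∑ p ∈ A.filter Big, (blockOnes Z q p.1 p.2).card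
              + ∑ p ∈ A.filter (fun p => ¬ Big p), (blockOnes Z q p.1 p.2).card
            ≤ k^4 * (2*(t*((k-1)*B))) + (k-1)^2 * (mtConst k * t) :=
              Nat.add_le_add hbig hsmall
          _ = (k-1)^2 * (mtConst k * t) + k^4 * (2*(t*((k-1)*B))) := Nat.add_comm _ _
          _ ≤ mtConst k * s := harith


-- ## Application layer

lemma mixed_mono {m n : ℕ} {M : BMatrix m n} {R R' : Set (Fin m)} {C C' : Set (Fin n)}
    (h : Mixed M R C) (hR : R ⊆ R') (hC : C ⊆ C') : Mixed M R' C' := by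
  constructor
  · intro hH
    exact h.1 fun i hi j hj j' hj' => hH i (hR hi) j (hC hj) j' (hC hj')
  · intro hV
    exact h.2 fun j hj i hi i' hi' => hV j (hC hj) i (hR hi) i' (hR hi')

lemma horizontal_iff_vertical {n : ℕ} {M : BMatrix n n} (hsym : ∀ i j, M i j = M j i)
    {R C : Set (Fin n)} : Horizontal M R C ↔ Vertical M C R := by
  constructor
  · intro h j hj i hi i' hi'
    rw [hsym i j, hsym i' j]
    exact h j hj i hi i' hi'
  · intro h i hi j hj j' hj'
    rw [hsym i j, hsym i j']
    exact h i hi j hj j' hj'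

lemma mixed_comm {n : ℕ} {M : BMatrix n n} (hsym : ∀ i j, M i j = M j i)
    {R C : Set (Fin n)} (h : Mixed M R C) : Mixed M C R := by
  refine ⟨fun hH => h.2 ?_, fun hV => h.1 ?_⟩
  · exact (horizontal_iff_vertical hsym).mp hH
  · exact (horizontal_iff_vertical hsym).mpr hV

lemma zoneMixed_symm {n s : ℕ} {M : BMatrix n n} (hg : Graphic M) {D : Division n n s}
    (hs : D.Symm) {i j : Fin s} (h : D.ZoneMixed M i j) : D.ZoneMixed M j i := by
  have hrc : ∀ l : Fin s, D.rowBlock l = D.colBlock l := by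
    intro l
    unfold Division.rowBlock Division.colBlock
    rw [hs]
  unfold Division.ZoneMixed at h ⊢
  rw [← hrc j] at h
  rw [← hrc i]
  exact mixed_comm hg.1 h

/-- The number of (ordered) mixed zones in any `s`-division of a `d`-mixed-free
matrix is at most `mtConst d * s`. -/
lemma mixedZones_le {n d : ℕ} (hd : 1 ≤ d) {M : BMatrix n n} (hmf : MixedFree d M)
    {s : ℕ} (D : Division n n s) (Z : BMatrix s s)
    (hZ : ∀ i j, Z i j = true → D.ZoneMixed M i j) :
    ones Z ≤ mtConst d * s := by
  apply mt_bound d hd s Z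
  rintro ⟨E, hE⟩
  apply hmf
  refine ⟨⟨E.row ∘ D.row, E.col ∘ D.col, E.row_mono.comp D.row_mono,
    E.col_mono.comp D.col_mono, E.row_surj.comp D.row_surj,
    E.col_surj.comp D.col_surj⟩, ?_⟩
  intro i j
  obtain ⟨a, b, ha, hb, hz⟩ := hE i j
  refine mixed_mono (hZ a b hz) ?_ ?_
  · intro x hx
    show E.row (D.row x) = i
    rw [show D.row x = a from hx, ha]
  · intro x hx
    show E.col (D.col x) = j
    rw [show D.col x = b from hx, hb]

/-- If the number of ordered adjacent pairs within every finite set is linearly bounded,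
every nonempty set has a vertex of small degree. -/
lemma exists_low_degree {s c : ℕ} (G : SimpleGraph (Fin s)) [DecidableRel G.Adj]
    (S : Finset (Fin s))
    (hS : S.Nonempty)
    (hcount : ((S ×ˢ S).filter fun p => G.Adj p.1 p.2).card ≤ c * S.card) :
    ∃ v ∈ S, (S.filter (G.Adj v)).card ≤ c := by
  by_contra hno
  push_neg at hno
  have hsum : ((S ×ˢ S).filter fun p => G.Adj p.1 p.2).card
      = ∑ v ∈ S, ((S.filter (G.Adj v)).card) := by
    rw [Finset.card_eq_sum_card_fiberwise
      (f := fun p : Fin s × Fin s => p.1) (t := S) ?_]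
    · apply Finset.sum_congr rfl
      intro v hv
      apply Finset.card_bij (fun p _ => p.2)
      · intro p hp
        simp only [Finset.mem_filter, Finset.mem_product] at hp ⊢
        obtain ⟨⟨⟨h1, h2⟩, h3⟩, h4⟩ := hp
        exact ⟨h2, h4 ▸ h3⟩
      · intro p hp p' hp' h
        simp only [Finset.mem_filter] at hp hp'
        exact Prod.ext (hp.2.trans hp'.2.symm) h
      · intro b hb
        simp only [Finset.mem_filter] at hb
        exact ⟨(v, b), by simp [Finset.mem_filter, Finset.mem_product, hv, hb.1, hb.2], rfl⟩
    · intro p hp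
      simp only [Finset.mem_coe, Finset.mem_filter, Finset.mem_product] at hp
      exact hp.1.1
  have : (c+1) * S.card ≤ ((S ×ˢ S).filter fun p => G.Adj p.1 p.2).card := by
    rw [hsum, Nat.mul_comm]
    calc S.card * (c+1) = ∑ _v ∈ S, (c+1) := by rw [Finset.sum_const, smul_eq_mul]
      _ ≤ ∑ v ∈ S, ((S.filter (G.Adj v)).card) :=
        Finset.sum_le_sum fun v hv => hno v hv
  have hpos : 0 < S.card := Finset.card_pos.mpr hS
  nlinarith [hcount]

/-- Greedy colouring from a degeneracy-type condition. -/
lemma colorable_of_low_degree {s c : ℕ} (G : SimpleGraph (Fin s)) [DecidableRel G.Adj]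
    (h : ∀ S : Finset (Fin s), S.Nonempty → ∃ v ∈ S, (S.filter (G.Adj v)).card ≤ c) :
    G.Colorable (c+1) := by
  classical
  have aux : ∀ S : Finset (Fin s), ∃ f : Fin s → Fin (c+1),
      ∀ a ∈ S, ∀ b ∈ S, G.Adj a b → f a ≠ f b := by
    intro S
    induction S using Finset.strongInduction with
    | _ S IH =>
      rcases Finset.eq_empty_or_nonempty S with rfl | hne
      · exact ⟨fun _ => 0, by simp⟩
      · obtain ⟨v, hv, hdeg⟩ := h S hne
        obtain ⟨f, hf⟩ := IH (S.erase v) (Finset.erase_ssubset hv)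
        have hcardlt : (((S.filter (G.Adj v))).image f).card < c + 1 := by
          calc (((S.filter (G.Adj v))).image f).card ≤ (S.filter (G.Adj v)).card :=
              Finset.card_image_le
            _ ≤ c := hdeg
            _ < c + 1 := Nat.lt_succ_self c
        have hex : ∃ x : Fin (c+1), x ∉ (S.filter (G.Adj v)).image f := by
          by_contra hall
          push_neg at hall
          have : (Finset.univ : Finset (Fin (c+1))) ⊆ (S.filter (G.Adj v)).image f :=
            fun x _ => hall x
          have := Finset.card_le_card this
          simp only [Finset.card_univ, Fintype.card_fin] at this
          omega
        obtain ⟨x, hx⟩ := hex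
        refine ⟨Function.update f v x, ?_⟩
        intro a ha b hb hab
        rcases eq_or_ne a v with hav | hav
        · have hbv : b ≠ v := fun hb' => G.irrefl (by rwa [hav, hb'] at hab)
          rw [hav, Function.update_self, Function.update_of_ne hbv]
          intro heq
          apply hx
          rw [heq]
          exact Finset.mem_image_of_mem f
            (Finset.mem_filter.mpr ⟨hb, by rwa [hav] at hab⟩)
        · rcases eq_or_ne b v with hbv | hbv
          · rw [hbv, Function.update_self, Function.update_of_ne hav]
            intro heq
            apply hx
            rw [← heq]
            exact Finset.mem_image_of_mem f
              (Finset.mem_filter.mpr ⟨ha, G.adj_symm (by rwa [hbv] at hab)⟩)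
          · rw [Function.update_of_ne hav, Function.update_of_ne hbv]
            exact hf a (Finset.mem_erase.mpr ⟨hav, ha⟩) b (Finset.mem_erase.mpr ⟨hbv, hb⟩) hab
  obtain ⟨f, hf⟩ := aux Finset.univ
  exact ⟨SimpleGraph.Coloring.mk f fun {a b} hab =>
    hf a (Finset.mem_univ a) b (Finset.mem_univ b) hab⟩


/-- For every `d ≥ 1` there is a constant `C ∈ ℕ` such that: for every
graphic matrix `M` that is `d`-mixed-free and every symmetric division `D` of `M`, the
chromatic number of the mixed compression satisfies `χ(G^M_D) ≤ C`. -/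
theorem mixed_compression_chromatic (d : ℕ) (hd : 1 ≤ d) :
    ∃ C : ℕ, ∀ (n : ℕ) (M : BMatrix n n), Graphic M → MixedFree d M →
      ∀ (s : ℕ) (D : Division n n s), D.Symm →
        (mixedCompression M D).chromaticNumber ≤ (C : ℕ∞) := by
  classical
  refine ⟨mtConst d + 1, ?_⟩
  intro n M hg hmf s D hDs
  letI : DecidableRel (mixedCompression M D).Adj := Classical.decRel _
  have hcol : (mixedCompression M D).Colorable (mtConst d + 1) := by
    apply colorable_of_low_degree
    intro S hS
    apply exists_low_degree _ _ hS
    -- bound the number of adjacent ordered pairs inside `S`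
    set t := S.card with htdef
    have ht : 0 < t := Finset.card_pos.mpr hS
    set u : Fin t → Fin s := fun m => S.orderEmbOfFin rfl m with hu
    have huSM : StrictMono u := (S.orderEmbOfFin rfl).strictMono
    set D' : Division n n t := ⟨stepMap ht u ∘ D.row, stepMap ht u ∘ D.col,
      (stepMap_mono ht u).comp D.row_mono, (stepMap_mono ht u).comp D.col_mono,
      (stepMap_surj ht huSM).comp D.row_surj,
      (stepMap_surj ht huSM).comp D.col_surj⟩ with hD'
    have hinj : ∀ a ∈ S, ∀ b ∈ S, stepMap ht u a = stepMap ht u b → a = b := by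
      intro a ha b hb hab
      have hra : a ∈ Set.range u := by rw [hu]; rw [Finset.range_orderEmbOfFin]; exact ha
      have hrb : b ∈ Set.range u := by rw [hu]; rw [Finset.range_orderEmbOfFin]; exact hb
      obtain ⟨ma, rfl⟩ := hra
      obtain ⟨mb, rfl⟩ := hrb
      rw [stepMap_apply ht huSM, stepMap_apply ht huSM] at hab
      rw [hab]
    set Z' : BMatrix t t := fun i j => decide (D'.ZoneMixed M i j) with hZ'
    have hstep : ((S ×ˢ S).filter
        fun p => (mixedCompression M D).Adj p.1 p.2).card
        ≤ (Finset.univ.filter fun p : Fin t × Fin t =>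
            Z' p.1 p.2 = true).card := by
      apply Finset.card_le_card_of_injOn
        (fun p => (stepMap ht u p.1, stepMap ht u p.2))
      · intro p hp
        simp only [Finset.mem_coe, Finset.mem_filter, Finset.mem_product] at hp
        obtain ⟨⟨hp1, hp2⟩, hadj⟩ := hp
        rw [mixedCompression, SimpleGraph.fromRel_adj] at hadj
        have hzm : D.ZoneMixed M p.1 p.2 := by
          rcases hadj.2 with h | h
          · exact h
          · exact zoneMixed_symm hg hDs h
        simp only [Finset.mem_coe, Finset.mem_filter, Finset.mem_univ, true_and, hZ', decide_eq_true_eq]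
        refine mixed_mono hzm ?_ ?_
        · intro x hx
          show stepMap ht u (D.row x) = stepMap ht u p.1
          rw [show D.row x = p.1 from hx]
        · intro x hx
          show stepMap ht u (D.col x) = stepMap ht u p.2
          rw [show D.col x = p.2 from hx]
      · intro p hp p' hp' heq
        simp only [Finset.mem_coe, Finset.mem_filter, Finset.mem_product] at hp hp'
        rw [Prod.ext_iff] at heq ⊢
        exact ⟨hinj p.1 hp.1.1 p'.1 hp'.1.1 heq.1, hinj p.2 hp.1.2 p'.2 hp'.1.2 heq.2⟩
    calc ((S ×ˢ S).filter fun p => (mixedCompression M D).Adj p.1 p.2).card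
        ≤ _ := hstep
      _ ≤ mtConst d * t := by
          refine mixedZones_le hd hmf D' Z' ?_
          intro i j hij
          rw [hZ', decide_eq_true_eq] at hij
          exact hij
      _ = mtConst d * S.card := by rw [htdef]
  have := hcol.chromaticNumber_le
  exact_mod_cast this

end TwPaper
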